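/- Let X ∈ ℝ^{N×N} be symmetric positive semidefinite of rank r with eigenvalues λ₁ ≥ ⋯ ≥ λ_r > 0, let 1 ≤ k ≤ r, let W_k, Λ_k, U* = W_k Λ_k^{1/2} be as usual, and set L = ‖U*U*ᵀ‖_F. Let B₁,…,B_M ∈ ℝ^{N×N}, set A_m = (B_m + B_mᵀ)/2, and suppose that for every Z ∈ ℝ^{N×N} with rank(Z) ≤ r+k one has (1−δ)‖Z‖_F² ≤ Σ_{m=1}^M ⟨B_m, Z⟩² ≤ (1+δ)‖Z‖_F², where ⟨·,·⟩ is the trace inner product. Let ε > 0 and suppose δ ≤ ε / (2 √(8/7) k^{1/4} ((8/7)L + ‖X‖_F) L^{1/2}). Then for every U ∈ ℝ^{N×k} with full column rank and ‖UUᵀ‖_F ≤ (8/7)L, one has ‖(Σ_{m=1}^M ⟨A_m, UUᵀ − X⟩ A_m) U − (UUᵀ − X)U‖_F ≤ ε/2. -/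

import Mathlib

open Matrix

noncomputable def frob {m n : Type*} [Fintype m] [Fintype n] (M : Matrix m n ℝ) : ℝ :=
  Real.sqrt (∑ i, ∑ j, (M i j) ^ 2)

noncomputable def mip {m n : Type*} [Fintype m] [Fintype n] (A B : Matrix m n ℝ) : ℝ :=
  ∑ i, ∑ j, A i j * B i j

section helpers
variable {m n : Type*} [Fintype m] [Fintype n]

lemma mip_comm (A B : Matrix m n ℝ) : mip A B = mip B A := by
  simp [mip, mul_comm]

lemma mip_add_right (A B C : Matrix m n ℝ) : mip A (B + C) = mip A B + mip A C := by
  simp [mip, mul_add, Finset.sum_add_distrib]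

lemma mip_sub_right (A B C : Matrix m n ℝ) : mip A (B - C) = mip A B - mip A C := by
  simp [mip, mul_sub, Finset.sum_sub_distrib]

lemma mip_smul_right (A B : Matrix m n ℝ) (s : ℝ) : mip A (s • B) = s * mip A B := by
  simp only [mip, Matrix.smul_apply, smul_eq_mul, Finset.mul_sum]
  refine Finset.sum_congr rfl fun i _ => Finset.sum_congr rfl fun j _ => by ring

lemma mip_add_left (A B C : Matrix m n ℝ) : mip (A + B) C = mip A C + mip B C := by
  rw [mip_comm, mip_add_right, mip_comm C A, mip_comm C B]

lemma mip_sub_left (A B C : Matrix m n ℝ) : mip (A - B) C = mip A C - mip B C := by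
  rw [mip_comm, mip_sub_right, mip_comm C A, mip_comm C B]

lemma mip_smul_left (A B : Matrix m n ℝ) (s : ℝ) : mip (s • A) B = s * mip A B := by
  rw [mip_comm, mip_smul_right, mip_comm]

lemma mip_sum_right {ι : Type*} (s : Finset ι) (A : Matrix m n ℝ) (f : ι → Matrix m n ℝ) :
    mip A (∑ j ∈ s, f j) = ∑ j ∈ s, mip A (f j) := by
  classical
  induction s using Finset.induction with
  | empty => simp [mip]
  | insert _ _ h ih => rw [Finset.sum_insert h, mip_add_right, ih, Finset.sum_insert h]

lemma mip_transpose (A B : Matrix m n ℝ) : mip Aᵀ Bᵀ = mip A B := by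
  rw [mip, Finset.sum_comm]; simp [mip, transpose_apply]

lemma mip_self_nonneg (A : Matrix m n ℝ) : 0 ≤ mip A A := by
  apply Finset.sum_nonneg; intro i _; apply Finset.sum_nonneg; intro j _; exact mul_self_nonneg _

lemma frob_nonneg (A : Matrix m n ℝ) : 0 ≤ frob A := Real.sqrt_nonneg _

lemma frob_sq (A : Matrix m n ℝ) : frob A ^ 2 = mip A A := by
  rw [frob, Real.sq_sqrt]
  · simp [mip, sq]
  · positivity

lemma eq_zero_of_frob_eq_zero {A : Matrix m n ℝ} (h : frob A = 0) : A = 0 := by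
  have h2 : (∑ i, ∑ j, (A i j) ^ 2) = 0 := by
    have := frob_sq A
    rw [h] at this
    simp only [mip, ← sq] at this ⊢
    linarith [this]
  ext i j
  have hi : ∀ i ∈ Finset.univ, (0:ℝ) ≤ ∑ j, (A i j)^2 := by
    intro i _; positivity
  have := (Finset.sum_eq_zero_iff_of_nonneg hi).mp h2 i (Finset.mem_univ i)
  have hj : ∀ j ∈ Finset.univ, (0:ℝ) ≤ (A i j)^2 := by intro j _; positivity
  have := (Finset.sum_eq_zero_iff_of_nonneg hj).mp this j (Finset.mem_univ j)
  simpa using pow_eq_zero_iff (n := 2) (by norm_num) |>.mp this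

lemma frob_smul (s : ℝ) (A : Matrix m n ℝ) : frob (s • A) = |s| * frob A := by
  rw [frob, frob]
  have : (∑ i, ∑ j, ((s • A) i j) ^ 2) = s^2 * ∑ i, ∑ j, (A i j)^2 := by
    simp [Matrix.smul_apply, mul_pow, Finset.mul_sum]
  rw [this, Real.sqrt_mul (sq_nonneg s), Real.sqrt_sq_eq_abs]

section helpers2
variable {N k : ℕ}

-- trace shift
lemma mip_mul_right (P : Matrix (Fin N) (Fin N) ℝ) (U : Matrix (Fin N) (Fin k) ℝ)
    (G : Matrix (Fin N) (Fin k) ℝ) : mip (P * U) G = mip P (G * Uᵀ) := by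
  simp only [mip, mul_apply, transpose_apply, Finset.sum_mul, Finset.mul_sum]
  refine Finset.sum_congr rfl fun i _ => ?_
  rw [Finset.sum_comm]
  refine Finset.sum_congr rfl fun l _ => Finset.sum_congr rfl fun j _ => by ring

lemma frob_vecMulVec (v : Fin N → ℝ) : frob (vecMulVec v v) = ∑ i, (v i)^2 := by
  rw [frob]
  have : (∑ i, ∑ j, (vecMulVec v v i j) ^ 2) = (∑ i, (v i)^2) * (∑ i, (v i)^2) := by
    simp only [vecMulVec_apply, mul_pow, Finset.sum_mul, Finset.mul_sum]
    exact Finset.sum_congr rfl fun i _ => Finset.sum_congr rfl fun j _ => by ring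
  rw [this, Real.sqrt_mul_self (by positivity)]

lemma rank_smul_le (s : ℝ) (A : Matrix (Fin N) (Fin N) ℝ) : (s • A).rank ≤ A.rank := by
  have : s • A = (s • (1 : Matrix (Fin N) (Fin N) ℝ)) * A := by
    rw [Matrix.smul_mul, Matrix.one_mul]
  rw [this]
  exact rank_mul_le_right _ _

lemma rank_add_le' (A B : Matrix (Fin N) (Fin N) ℝ) : (A + B).rank ≤ A.rank + B.rank := by
  rw [Matrix.rank, Matrix.rank, Matrix.rank, mulVecLin_add]
  have hle : LinearMap.range (A.mulVecLin + B.mulVecLin) ≤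
      LinearMap.range A.mulVecLin ⊔ LinearMap.range B.mulVecLin := by
    rintro x ⟨y, rfl⟩
    exact Submodule.add_mem_sup ⟨y, rfl⟩ ⟨y, rfl⟩
  calc Module.finrank ℝ (LinearMap.range (A.mulVecLin + B.mulVecLin))
      ≤ Module.finrank ℝ ↥(LinearMap.range A.mulVecLin ⊔ LinearMap.range B.mulVecLin) :=
        Submodule.finrank_mono hle
    _ ≤ _ := Submodule.finrank_add_le_finrank_add_finrank _ _

lemma rank_vecMulVec_le (v w : Fin N → ℝ) : (vecMulVec v w).rank ≤ 1 := by
  rw [vecMulVec_eq Unit]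
  calc (replicateCol Unit v * replicateRow Unit w).rank ≤ (replicateRow Unit w).rank := rank_mul_le_right _ _
    _ ≤ Fintype.card Unit := rank_le_card_height _
    _ = 1 := by simp

end helpers2

section key
variable {N M : ℕ}

lemma key_bilinear (B : Fin M → Matrix (Fin N) (Fin N) ℝ) (δ : ℝ) (R : ℕ)
    (hRIP : ∀ Z : Matrix (Fin N) (Fin N) ℝ, Z.rank ≤ R →
      (1 - δ) * frob Z ^ 2 ≤ ∑ m, mip (B m) Z ^ 2 ∧
      ∑ m, mip (B m) Z ^ 2 ≤ (1 + δ) * frob Z ^ 2)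
    (Z1 Z2 : Matrix (Fin N) (Fin N) ℝ)
    (hr : ∀ α β : ℝ, (α • Z1 + β • Z2).rank ≤ R) :
    |(∑ m, mip (B m) Z1 * mip (B m) Z2) - mip Z1 Z2| ≤ δ * frob Z1 * frob Z2 := by
  have habs : ∀ Z : Matrix (Fin N) (Fin N) ℝ, Z.rank ≤ R →
      |(∑ m, mip (B m) Z ^ 2) - frob Z ^ 2| ≤ δ * frob Z ^ 2 := by
    intro Z hZ
    obtain ⟨h1, h2⟩ := hRIP Z hZ
    rw [abs_le]; constructor <;> nlinarith
  by_cases h1 : frob Z1 = 0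
  · have : Z1 = 0 := eq_zero_of_frob_eq_zero h1
    subst this
    simp [mip, h1]
  by_cases h2 : frob Z2 = 0
  · have : Z2 = 0 := eq_zero_of_frob_eq_zero h2
    subst this
    simp [mip, h2]
  have ha : 0 < frob Z1 := lt_of_le_of_ne (frob_nonneg _) (Ne.symm h1)
  have hc : 0 < frob Z2 := lt_of_le_of_ne (frob_nonneg _) (Ne.symm h2)
  set a := frob Z1
  set c := frob Z2
  set W1 := a⁻¹ • Z1 with hW1
  set W2 := c⁻¹ • Z2 with hW2
  have hfW1 : frob W1 = 1 := by
    rw [hW1, frob_smul, abs_of_pos (by positivity)]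
    field_simp
    rfl
  have hfW2 : frob W2 = 1 := by
    rw [hW2, frob_smul, abs_of_pos (by positivity)]
    field_simp
    rfl
  have hmipW1 : mip W1 W1 = 1 := by rw [← frob_sq, hfW1]; norm_num
  have hmipW2 : mip W2 W2 = 1 := by rw [← frob_sq, hfW2]; norm_num
  -- ranks
  have hrp : (W1 + W2).rank ≤ R := hr a⁻¹ c⁻¹
  have hrm : (W1 - W2).rank ≤ R := by
    have := hr a⁻¹ (-c⁻¹)
    rwa [neg_smul, ← sub_eq_add_neg] at this
  have hp := habs _ hrp
  have hm := habs _ hrm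
  -- expand frobs
  have hfp : frob (W1 + W2) ^ 2 = 2 + 2 * mip W1 W2 := by
    rw [frob_sq, mip_add_right, mip_add_left, mip_add_left, hmipW1, hmipW2,
      mip_comm W2 W1]
    ring
  have hfm : frob (W1 - W2) ^ 2 = 2 - 2 * mip W1 W2 := by
    rw [frob_sq, mip_sub_right, mip_sub_left, mip_sub_left, hmipW1, hmipW2,
      mip_comm W2 W1]
    ring
  -- expand quadratic forms
  have hq : (∑ m, mip (B m) (W1 + W2) ^ 2) - (∑ m, mip (B m) (W1 - W2) ^ 2)
      = 4 * ∑ m, mip (B m) W1 * mip (B m) W2 := by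
    rw [← Finset.sum_sub_distrib, Finset.mul_sum]
    refine Finset.sum_congr rfl fun m _ => ?_
    rw [mip_add_right, mip_sub_right]
    ring
  have hmain : |(∑ m, mip (B m) W1 * mip (B m) W2) - mip W1 W2| ≤ δ := by
    have h4 : 4 * ((∑ m, mip (B m) W1 * mip (B m) W2) - mip W1 W2)
        = ((∑ m, mip (B m) (W1 + W2) ^ 2) - frob (W1 + W2) ^ 2)
          - ((∑ m, mip (B m) (W1 - W2) ^ 2) - frob (W1 - W2) ^ 2) := by
      rw [hfp, hfm]
      linarith [hq]
    have := abs_sub (((∑ m, mip (B m) (W1 + W2) ^ 2) - frob (W1 + W2) ^ 2))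
      (((∑ m, mip (B m) (W1 - W2) ^ 2) - frob (W1 - W2) ^ 2))
    rw [abs_le] at hp hm ⊢
    rw [hfp] at hp
    rw [hfm] at hm
    constructor <;> nlinarith [hp.1, hp.2, hm.1, hm.2]
  -- scale back
  have hscale : ∀ m, mip (B m) Z1 * mip (B m) Z2 = a * c * (mip (B m) W1 * mip (B m) W2) := by
    intro m
    rw [hW1, hW2, mip_smul_right, mip_smul_right]
    field_simp
    try ring
  have hscale2 : mip Z1 Z2 = a * c * mip W1 W2 := by
    rw [hW1, hW2, mip_smul_right, mip_smul_left]
    field_simp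
    try ring
  calc |(∑ m, mip (B m) Z1 * mip (B m) Z2) - mip Z1 Z2|
      = |a * c| * |(∑ m, mip (B m) W1 * mip (B m) W2) - mip W1 W2| := by
        rw [← abs_mul]
        congr 1
        rw [mul_sub, Finset.mul_sum, ← hscale2]
        congr 1
        exact Finset.sum_congr rfl fun m _ => (hscale m)
    _ ≤ |a * c| * δ := by
        apply mul_le_mul_of_nonneg_left hmain (abs_nonneg _)
    _ = δ * a * c := by
        rw [abs_of_pos (by positivity)]
        ring
end key

section helpers3
variable {N k : ℕ}

lemma mip_eq_trace {m n : Type*} [Fintype m] [Fintype n] (A B : Matrix m n ℝ) :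
    mip A B = Matrix.trace (A * Bᵀ) := by
  simp [mip, Matrix.trace, Matrix.diag, mul_apply]

lemma sq_mip_le (U : Matrix (Fin N) (Fin k) ℝ) :
    (mip U U)^2 ≤ (k : ℝ) * mip (U * Uᵀ) (U * Uᵀ) := by
  have hq : mip U U = ∑ j, (Uᵀ * U) j j := by
    rw [mip, Finset.sum_comm]
    refine Finset.sum_congr rfl fun j _ => ?_
    simp [mul_apply]
  have h1 : (mip U U)^2 ≤ (k : ℝ) * ∑ j, ((Uᵀ * U) j j)^2 := by
    rw [hq]
    have := Finset.sum_mul_sq_le_sq_mul_sq Finset.univ (fun j : Fin k => (Uᵀ * U) j j)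
      (fun _ => (1:ℝ))
    simp only [mul_one, one_pow, Finset.sum_const, Finset.card_univ, Fintype.card_fin,
      nsmul_eq_mul] at this
    calc (∑ j, (Uᵀ * U) j j)^2 ≤ (∑ j, ((Uᵀ * U) j j)^2) * (k : ℝ) := this
      _ = (k : ℝ) * ∑ j, ((Uᵀ * U) j j)^2 := by ring
  have h2 : (∑ j, ((Uᵀ * U) j j)^2) ≤ mip (Uᵀ * U) (Uᵀ * U) := by
    rw [mip]
    refine Finset.sum_le_sum fun j _ => ?_
    have : ((Uᵀ * U) j j)^2 = (Uᵀ * U) j j * (Uᵀ * U) j j := sq _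
    rw [this]
    exact Finset.single_le_sum (f := fun l => (Uᵀ * U) j l * (Uᵀ * U) j l)
      (fun l _ => mul_self_nonneg _) (Finset.mem_univ j)
  have h3 : mip (Uᵀ * U) (Uᵀ * U) = mip (U * Uᵀ) (U * Uᵀ) := by
    rw [mip_eq_trace, mip_eq_trace, Matrix.transpose_mul, Matrix.transpose_transpose,
      Matrix.transpose_mul, Matrix.transpose_transpose]
    rw [show Uᵀ * U * (Uᵀ * U) = Uᵀ * (U * (Uᵀ * U)) by
      simp only [Matrix.mul_assoc]]
    rw [Matrix.trace_mul_comm]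
    simp only [Matrix.mul_assoc]
  have hk : (0:ℝ) ≤ k := Nat.cast_nonneg k
  nlinarith [h1, h2, h3]

lemma frob_U_le (U : Matrix (Fin N) (Fin k) ℝ) :
    frob U ≤ (k : ℝ) ^ ((1:ℝ)/4) * Real.sqrt (frob (U * Uᵀ)) := by
  have h0 : frob U = Real.sqrt (mip U U) := by
    rw [← frob_sq, Real.sqrt_sq (frob_nonneg _)]
  have h1 : mip U U ≤ Real.sqrt k * frob (U * Uᵀ) := by
    have hs := sq_mip_le U
    rw [← frob_sq (U * Uᵀ)] at hs
    have hnn : 0 ≤ mip U U := mip_self_nonneg U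
    have e : Real.sqrt (k:ℝ) ^ 2 = (k:ℝ) := Real.sq_sqrt (by positivity)
    have hF : 0 ≤ frob (U * Uᵀ) := frob_nonneg _
    have hns : (0:ℝ) ≤ Real.sqrt (k:ℝ) := Real.sqrt_nonneg _
    nlinarith [hs, e, hnn, hF, hns, mul_nonneg hns hF]
  calc frob U = Real.sqrt (mip U U) := h0
    _ ≤ Real.sqrt (Real.sqrt k * frob (U * Uᵀ)) := Real.sqrt_le_sqrt h1
    _ = Real.sqrt (Real.sqrt k) * Real.sqrt (frob (U * Uᵀ)) :=
        Real.sqrt_mul (Real.sqrt_nonneg _) _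
    _ = (k : ℝ) ^ ((1:ℝ)/4) * Real.sqrt (frob (U * Uᵀ)) := by
        rw [Real.sqrt_eq_rpow, Real.sqrt_eq_rpow, ← Real.rpow_mul (Nat.cast_nonneg k)]
        norm_num

end helpers3

set_option maxHeartbeats 2000000 in
theorem stmt_13 {N r k M : ℕ} (hk1 : 1 ≤ k) (hkr : k ≤ r)
    (W : Matrix (Fin N) (Fin r) ℝ) (lam : Fin r → ℝ)
    (hW : Wᵀ * W = 1) (hpos : ∀ i, 0 < lam i)
    (hdesc : ∀ i j : Fin r, i ≤ j → lam j ≤ lam i)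
    (X : Matrix (Fin N) (Fin N) ℝ) (hX : X = W * diagonal lam * Wᵀ)
    (Ustar : Matrix (Fin N) (Fin k) ℝ)
    (hUstar : Ustar = W.submatrix id (Fin.castLE hkr) *
      diagonal (fun j : Fin k => Real.sqrt (lam (Fin.castLE hkr j))))
    (L : ℝ) (hL : L = frob (Ustar * Ustarᵀ))
    (B A : Fin M → Matrix (Fin N) (Fin N) ℝ)
    (hA : ∀ m, A m = ((1 : ℝ) / 2) • (B m + (B m)ᵀ))
    (δ ε : ℝ) (hε : 0 < ε)
    (hRIP : ∀ Z : Matrix (Fin N) (Fin N) ℝ, Z.rank ≤ r + k →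
      (1 - δ) * frob Z ^ 2 ≤ ∑ m, mip (B m) Z ^ 2 ∧
      ∑ m, mip (B m) Z ^ 2 ≤ (1 + δ) * frob Z ^ 2)
    (hδ : δ ≤ ε / (2 * Real.sqrt (8 / 7) * (k : ℝ) ^ ((1 : ℝ) / 4) *
      ((8 / 7) * L + frob X) * Real.sqrt L)) :
    ∀ U : Matrix (Fin N) (Fin k) ℝ, U.rank = k → frob (U * Uᵀ) ≤ (8 / 7) * L →
      frob ((∑ m, mip (A m) (U * Uᵀ - X) • A m) * U - (U * Uᵀ - X) * U) ≤ ε / 2 := by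
  intro U hUr hUn
  -- symmetry facts
  have hXsym : Xᵀ = X := by
    rw [hX]
    simp [Matrix.transpose_mul, Matrix.mul_assoc]
  have hEsym : (U * Uᵀ - X)ᵀ = U * Uᵀ - X := by
    rw [Matrix.transpose_sub, Matrix.transpose_mul, Matrix.transpose_transpose, hXsym]
  -- L > 0
  have hL0 : 0 < L := by
    set j0 : Fin k := ⟨0, hk1⟩ with hj0
    set jr : Fin r := Fin.castLE hkr j0 with hjr
    have hdiag : (∑ i, W i jr * W i jr) = 1 := by
      have h1 := congrFun (congrFun hW jr) jr
      simpa [Matrix.mul_apply, Matrix.transpose_apply, Matrix.one_apply] using h1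
    have hex : ∃ i, W i jr ≠ 0 := by
      by_contra h
      push_neg at h
      simp [h] at hdiag
    obtain ⟨i, hi⟩ := hex
    have hU0 : Ustar i j0 ≠ 0 := by
      rw [hUstar]
      rw [Matrix.mul_diagonal]
      simp only [Matrix.submatrix_apply, id_eq]
      rw [← hjr]
      exact mul_ne_zero hi (ne_of_gt (Real.sqrt_pos.mpr (hpos jr)))
    rcases lt_or_eq_of_le (frob_nonneg (Ustar * Ustarᵀ)) with h | h
    · rw [hL]; exact h
    · exfalso
      have hz : Ustar * Ustarᵀ = 0 := eq_zero_of_frob_eq_zero h.symm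
      have he : (Ustar * Ustarᵀ) i i = 0 := by rw [hz]; rfl
      have hpos' : 0 < (Ustar * Ustarᵀ) i i := by
        rw [Matrix.mul_apply]
        have hle : Ustar i j0 * Ustar i j0 ≤ ∑ j, Ustar i j * Ustarᵀ j i := by
          simp only [Matrix.transpose_apply]
          exact Finset.single_le_sum (f := fun j => Ustar i j * Ustar i j)
            (fun j _ => mul_self_nonneg _) (Finset.mem_univ j0)
        have : 0 < Ustar i j0 * Ustar i j0 := mul_self_pos.mpr hU0
        linarith
      linarith [he, hpos']
  -- δ nonneg
  have hδ0 : 0 ≤ δ := by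
    have hrZ0 : (Ustar * Ustarᵀ).rank ≤ r + k := by
      refine (rank_mul_le_left _ _).trans ?_
      refine (rank_le_card_width _).trans ?_
      simp only [Fintype.card_fin]
      omega
    obtain ⟨ha, hb⟩ := hRIP _ hrZ0
    rw [← hL] at ha hb
    nlinarith [mul_pos hL0 hL0]
  -- rank facts
  have hrX : X.rank ≤ r := by
    rw [hX]
    refine (rank_mul_le_left _ _).trans ((rank_mul_le_left _ _).trans ?_)
    simpa using W.rank_le_card_width
  have hrUU : (U * Uᵀ).rank ≤ k := by
    refine (rank_mul_le_left _ _).trans ?_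
    simpa using U.rank_le_card_width
  have hr1 : ∀ v : Fin N → ℝ, ∀ α β : ℝ, (α • (U * Uᵀ) + β • vecMulVec v v).rank ≤ r + k := by
    intro v α β
    calc (α • (U * Uᵀ) + β • vecMulVec v v).rank
        ≤ (α • (U * Uᵀ)).rank + (β • vecMulVec v v).rank := rank_add_le' _ _
      _ ≤ k + 1 := add_le_add ((rank_smul_le _ _).trans hrUU)
          ((rank_smul_le _ _).trans (_root_.rank_vecMulVec_le _ _))
      _ ≤ r + k := by omega
  have hr2 : ∀ v : Fin N → ℝ, ∀ α β : ℝ, (α • X + β • vecMulVec v v).rank ≤ r + k := by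
    intro v α β
    calc (α • X + β • vecMulVec v v).rank
        ≤ (α • X).rank + (β • vecMulVec v v).rank := rank_add_le' _ _
      _ ≤ r + 1 := add_le_add ((rank_smul_le _ _).trans hrX)
          ((rank_smul_le _ _).trans (_root_.rank_vecMulVec_le _ _))
      _ ≤ r + k := by omega
  have keyUU : ∀ v : Fin N → ℝ,
      |(∑ m, mip (B m) (U * Uᵀ) * mip (B m) (vecMulVec v v)) - mip (U * Uᵀ) (vecMulVec v v)|
        ≤ δ * frob (U * Uᵀ) * (∑ i, (v i)^2) := by
    intro v
    have := key_bilinear B δ (r + k) hRIP (U * Uᵀ) (vecMulVec v v) (hr1 v)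
    rwa [frob_vecMulVec] at this
  have keyX : ∀ v : Fin N → ℝ,
      |(∑ m, mip (B m) X * mip (B m) (vecMulVec v v)) - mip X (vecMulVec v v)|
        ≤ δ * frob X * (∑ i, (v i)^2) := by
    intro v
    have := key_bilinear B δ (r + k) hRIP X (vecMulVec v v) (hr2 v)
    rwa [frob_vecMulVec] at this
  -- abbreviations
  set E : Matrix (Fin N) (Fin N) ℝ := U * Uᵀ - X with hE
  set G : Matrix (Fin N) (Fin k) ℝ := (∑ m, mip (A m) E • A m) * U - E * U with hG
  set T : Matrix (Fin N) (Fin N) ℝ := G * Uᵀ with hT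
  set S : Matrix (Fin N) (Fin N) ℝ := (1/2 : ℝ) • (T + Tᵀ) with hS
  -- A vs B inner products
  have hmipAT : ∀ m (Z : Matrix (Fin N) (Fin N) ℝ),
      mip (A m) Z = mip (B m) ((1/2 : ℝ) • (Z + Zᵀ)) := by
    intro m Z
    have h' : mip (B m)ᵀ Z = mip (B m) Zᵀ := by
      rw [← mip_transpose (B m) Zᵀ, Matrix.transpose_transpose]
    rw [hA m, mip_smul_left, mip_add_left, mip_smul_right, mip_add_right, h']
  have hhalf : (1/2 : ℝ) • (E + Eᵀ) = E := by
    rw [hEsym]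
    rw [← two_smul ℝ E, smul_smul]
    norm_num
  have hcB : ∀ m, mip (A m) E = mip (B m) E := by
    intro m
    rw [hmipAT m E, hhalf]
  have hmipET : mip E S = mip E T := by
    have h1 : mip E Tᵀ = mip E T := by
      rw [← mip_transpose E Tᵀ]
      rw [Matrix.transpose_transpose, hEsym]
    rw [hS, mip_smul_right, mip_add_right, h1]
    ring
  -- the central identity
  have hGG : mip G G = (∑ m, mip (B m) E * mip (B m) S) - mip E S := by
    nth_rewrite 1 [hG]
    rw [mip_sub_left, mip_mul_right, mip_mul_right, ← hT]
    have hsum : mip (∑ m, mip (A m) E • A m) T = ∑ m, mip (B m) E * mip (B m) S := by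
      rw [mip_comm, mip_sum_right]
      refine Finset.sum_congr rfl fun m _ => ?_
      rw [mip_smul_right, mip_comm T (A m), hmipAT m T, ← hS, hcB m]
    rw [hsum, hmipET]
  -- column decomposition
  set g : Fin k → Fin N → ℝ := fun j i => G i j with hgdef
  set u : Fin k → Fin N → ℝ := fun j i => U i j with hudef
  set Sj : Fin k → Matrix (Fin N) (Fin N) ℝ :=
    fun j => (1/2 : ℝ) • (vecMulVec (g j) (u j) + vecMulVec (u j) (g j)) with hSjdef
  have hSdecomp : S = ∑ j, Sj j := by
    rw [hS, hT]
    ext i i'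
    simp only [Matrix.smul_apply, Matrix.add_apply, Matrix.transpose_apply, Matrix.mul_apply,
      Matrix.sum_apply, vecMulVec_apply, smul_eq_mul, hSjdef, hgdef, hudef]
    rw [← Finset.sum_add_distrib, Finset.mul_sum]
    exact Finset.sum_congr rfl fun j _ => by ring
  -- split of the deviation functional through E = U*Uᵀ - X
  have hDv : ∀ Z : Matrix (Fin N) (Fin N) ℝ,
      (∑ m, mip (B m) E * mip (B m) Z) - mip E Z
        = ((∑ m, mip (B m) (U * Uᵀ) * mip (B m) Z) - mip (U * Uᵀ) Z)
          - ((∑ m, mip (B m) X * mip (B m) Z) - mip X Z) := by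
    intro Z
    simp only [hE, mip_sub_left, mip_sub_right, sub_mul, Finset.sum_sub_distrib]
    ring
  have hAbs : ∀ v : Fin N → ℝ,
      |(∑ m, mip (B m) E * mip (B m) (vecMulVec v v)) - mip E (vecMulVec v v)|
        ≤ δ * (frob (U * Uᵀ) + frob X) * (∑ i, (v i)^2) := by
    intro v
    rw [hDv]
    calc |((∑ m, mip (B m) (U * Uᵀ) * mip (B m) (vecMulVec v v)) - mip (U * Uᵀ) (vecMulVec v v))
          - ((∑ m, mip (B m) X * mip (B m) (vecMulVec v v)) - mip X (vecMulVec v v))|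
        ≤ |(∑ m, mip (B m) (U * Uᵀ) * mip (B m) (vecMulVec v v)) - mip (U * Uᵀ) (vecMulVec v v)|
          + |(∑ m, mip (B m) X * mip (B m) (vecMulVec v v)) - mip X (vecMulVec v v)| :=
            abs_sub _ _
      _ ≤ δ * frob (U * Uᵀ) * (∑ i, (v i)^2) + δ * frob X * (∑ i, (v i)^2) :=
            add_le_add (keyUU v) (keyX v)
      _ = δ * (frob (U * Uᵀ) + frob X) * (∑ i, (v i)^2) := by ring
  -- per-column bound
  have hpiece : ∀ j, |(∑ m, mip (B m) E * mip (B m) (Sj j)) - mip E (Sj j)|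
      ≤ δ * (frob (U * Uᵀ) + frob X) *
        (Real.sqrt (∑ i, (g j i)^2) * Real.sqrt (∑ i, (u j i)^2)) := by
    intro j
    by_cases hgz : (∑ i, (g j i)^2) = 0
    · have hg0 : ∀ i, g j i = 0 := by
        intro i
        have h0 := (Finset.sum_eq_zero_iff_of_nonneg
          (fun i _ => sq_nonneg (g j i))).mp hgz i (Finset.mem_univ i)
        exact pow_eq_zero_iff (n := 2) (by norm_num) |>.mp h0
      have hSj0 : Sj j = 0 := by
        simp only [hSjdef]
        ext i i'
        simp [vecMulVec_apply, hg0]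
      rw [hSj0, hgz, Real.sqrt_zero]
      simp [mip]
    by_cases huz : (∑ i, (u j i)^2) = 0
    · have hu0 : ∀ i, u j i = 0 := by
        intro i
        have h0 := (Finset.sum_eq_zero_iff_of_nonneg
          (fun i _ => sq_nonneg (u j i))).mp huz i (Finset.mem_univ i)
        exact pow_eq_zero_iff (n := 2) (by norm_num) |>.mp h0
      have hSj0 : Sj j = 0 := by
        simp only [hSjdef]
        ext i i'
        simp [vecMulVec_apply, hu0]
      rw [hSj0, huz, Real.sqrt_zero]
      simp [mip]
    · have hgp : 0 < ∑ i, (g j i)^2 :=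
        lt_of_le_of_ne (Finset.sum_nonneg fun i _ => sq_nonneg _) (Ne.symm hgz)
      have hup : 0 < ∑ i, (u j i)^2 :=
        lt_of_le_of_ne (Finset.sum_nonneg fun i _ => sq_nonneg _) (Ne.symm huz)
      set gn := Real.sqrt (∑ i, (g j i)^2) with hgn
      set un := Real.sqrt (∑ i, (u j i)^2) with hun
      have hgnp : 0 < gn := Real.sqrt_pos.mpr hgp
      have hunp : 0 < un := Real.sqrt_pos.mpr hup
      have hgn2 : gn^2 = ∑ i, (g j i)^2 := Real.sq_sqrt hgp.le
      have hun2 : un^2 = ∑ i, (u j i)^2 := Real.sq_sqrt hup.le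
      set t := Real.sqrt (un / gn) with htdef
      have htp : 0 < t := Real.sqrt_pos.mpr (div_pos hunp hgnp)
      have ht2 : t^2 = un / gn := Real.sq_sqrt (div_pos hunp hgnp).le
      set vp : Fin N → ℝ := fun i => t * g j i + u j i / t with hvp
      set vm : Fin N → ℝ := fun i => t * g j i - u j i / t with hvm
      have hsplit : Sj j = (1/4 : ℝ) • (vecMulVec vp vp - vecMulVec vm vm) := by
        simp only [hSjdef]
        ext i i'
        simp only [vecMulVec_apply, Matrix.smul_apply, Matrix.sub_apply, Matrix.add_apply,
          smul_eq_mul, hvp, hvm]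
        field_simp
        ring
      have hlin4 : (∑ m, mip (B m) E * mip (B m) (Sj j)) - mip E (Sj j)
          = (1/4 : ℝ) *
            (((∑ m, mip (B m) E * mip (B m) (vecMulVec vp vp)) - mip E (vecMulVec vp vp))
            - ((∑ m, mip (B m) E * mip (B m) (vecMulVec vm vm)) - mip E (vecMulVec vm vm))) := by
        rw [hsplit]
        simp only [mip_smul_right, mip_sub_right]
        rw [Finset.sum_congr rfl (fun m _ =>
          show mip (B m) E * ((1/4 : ℝ) * (mip (B m) (vecMulVec vp vp)
              - mip (B m) (vecMulVec vm vm)))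
            = (1/4 : ℝ) * (mip (B m) E * mip (B m) (vecMulVec vp vp))
              - (1/4 : ℝ) * (mip (B m) E * mip (B m) (vecMulVec vm vm)) from by ring),
          Finset.sum_sub_distrib, ← Finset.mul_sum, ← Finset.mul_sum]
        ring
      have hsum2 : (∑ i, (vp i)^2) + (∑ i, (vm i)^2) = 4 * (gn * un) := by
        have hterm : ∀ i, (vp i)^2 + (vm i)^2
            = 2 * (t^2 * (g j i)^2) + 2 * ((u j i)^2 / t^2) := by
          intro i
          simp only [hvp, hvm]
          field_simp
          ring
        rw [← Finset.sum_add_distrib, Finset.sum_congr rfl (fun i _ => hterm i)]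
        have h1 : ∑ i, (2 * (t^2 * (g j i)^2) + 2 * ((u j i)^2 / t^2))
            = 2 * t^2 * (∑ i, (g j i)^2) + (2 / t^2) * (∑ i, (u j i)^2) := by
          rw [Finset.sum_add_distrib, Finset.mul_sum, Finset.mul_sum]
          congr 1
          · exact Finset.sum_congr rfl fun i _ => by ring
          · exact Finset.sum_congr rfl fun i _ => by ring
        rw [h1, ← hgn2, ← hun2, ht2]
        field_simp [hgnp.ne', hunp.ne']
        ring
      have hP := hAbs vp
      have hQ := hAbs vm
      set c := δ * (frob (U * Uᵀ) + frob X) with hcd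
      set x := (∑ m, mip (B m) E * mip (B m) (vecMulVec vp vp)) - mip E (vecMulVec vp vp) with hx
      set y := (∑ m, mip (B m) E * mip (B m) (vecMulVec vm vm)) - mip E (vecMulVec vm vm) with hy
      rw [hlin4, abs_mul, show |(1/4 : ℝ)| = 1/4 by norm_num]
      have habs2 := abs_sub x y
      have e : c * (∑ i, (vp i)^2) + c * (∑ i, (vm i)^2) = 4 * (c * (gn * un)) := by
        rw [← mul_add, hsum2]
        ring
      linarith [habs2, hP, hQ, e]
  -- assemble
  have hGGle : mip G G ≤ δ * (frob (U * Uᵀ) + frob X) * (frob G * frob U) := by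
    have hlin : (∑ m, mip (B m) E * mip (B m) S) - mip E S
        = ∑ j, ((∑ m, mip (B m) E * mip (B m) (Sj j)) - mip E (Sj j)) := by
      rw [hSdecomp]
      simp only [mip_sum_right, Finset.mul_sum]
      rw [Finset.sum_comm, ← Finset.sum_sub_distrib]
    have hg2 : (∑ j, (Real.sqrt (∑ i, (g j i)^2))^2) = frob G ^ 2 := by
      rw [frob, Real.sq_sqrt (by positivity)]
      rw [Finset.sum_congr rfl (fun j (_ : j ∈ Finset.univ) =>
        Real.sq_sqrt (Finset.sum_nonneg fun i _ => sq_nonneg (g j i)))]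
      rw [Finset.sum_comm]
    have hu2 : (∑ j, (Real.sqrt (∑ i, (u j i)^2))^2) = frob U ^ 2 := by
      rw [frob, Real.sq_sqrt (by positivity)]
      rw [Finset.sum_congr rfl (fun j (_ : j ∈ Finset.univ) =>
        Real.sq_sqrt (Finset.sum_nonneg fun i _ => sq_nonneg (u j i)))]
      rw [Finset.sum_comm]
    have hCS : (∑ j, Real.sqrt (∑ i, (g j i)^2) * Real.sqrt (∑ i, (u j i)^2))
        ≤ frob G * frob U := by
      have h2 := Finset.sum_mul_sq_le_sq_mul_sq Finset.univ
        (fun j : Fin k => Real.sqrt (∑ i, (g j i)^2))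
        (fun j : Fin k => Real.sqrt (∑ i, (u j i)^2))
      have hnn : (0:ℝ) ≤ ∑ j, Real.sqrt (∑ i, (g j i)^2) * Real.sqrt (∑ i, (u j i)^2) :=
        Finset.sum_nonneg fun j _ => mul_nonneg (Real.sqrt_nonneg _) (Real.sqrt_nonneg _)
      nlinarith [h2, hg2, hu2, hnn, frob_nonneg G, frob_nonneg U,
        mul_nonneg (frob_nonneg G) (frob_nonneg U)]
    have hFnn : (0:ℝ) ≤ δ * (frob (U * Uᵀ) + frob X) :=
      mul_nonneg hδ0 (add_nonneg (frob_nonneg _) (frob_nonneg _))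
    calc mip G G
        = ∑ j, ((∑ m, mip (B m) E * mip (B m) (Sj j)) - mip E (Sj j)) := by rw [hGG, hlin]
      _ ≤ ∑ j, |(∑ m, mip (B m) E * mip (B m) (Sj j)) - mip E (Sj j)| :=
          Finset.sum_le_sum fun j _ => le_abs_self _
      _ ≤ ∑ j, δ * (frob (U * Uᵀ) + frob X) *
            (Real.sqrt (∑ i, (g j i)^2) * Real.sqrt (∑ i, (u j i)^2)) :=
          Finset.sum_le_sum fun j _ => hpiece j
      _ = δ * (frob (U * Uᵀ) + frob X) *
            ∑ j, Real.sqrt (∑ i, (g j i)^2) * Real.sqrt (∑ i, (u j i)^2) := by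
          rw [← Finset.mul_sum]
      _ ≤ δ * (frob (U * Uᵀ) + frob X) * (frob G * frob U) :=
          mul_le_mul_of_nonneg_left hCS hFnn
  -- conclude
  by_cases hG0 : frob G = 0
  · rw [hG0]
    linarith [hε]
  · have hGpos : 0 < frob G := lt_of_le_of_ne (frob_nonneg _) (Ne.symm hG0)
    have hstep : frob G ≤ δ * (frob (U * Uᵀ) + frob X) * frob U := by
      have h := hGGle
      rw [← frob_sq] at h
      nlinarith [h, hGpos]
    have hfU := frob_U_le U
    have hsq : Real.sqrt (frob (U * Uᵀ)) ≤ Real.sqrt ((8/7)*L) := Real.sqrt_le_sqrt hUn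
    have hfU2 : frob U ≤ (k:ℝ)^((1:ℝ)/4) * (Real.sqrt (8/7) * Real.sqrt L) := by
      rw [← Real.sqrt_mul (by norm_num : (0:ℝ) ≤ 8/7)]
      exact hfU.trans (mul_le_mul_of_nonneg_left hsq (Real.rpow_nonneg (Nat.cast_nonneg k) _))
    set D0 := Real.sqrt (8/7) * (k:ℝ)^((1:ℝ)/4) * ((8/7)*L + frob X) * Real.sqrt L with hD0
    have hkpos : (0:ℝ) < (k:ℝ)^((1:ℝ)/4) := by
      have : (0:ℝ) < (k:ℝ) := by exact_mod_cast hk1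
      exact Real.rpow_pos_of_pos this _
    have hD0pos : 0 < D0 := by
      rw [hD0]
      have h87 : (0:ℝ) < Real.sqrt (8/7) := Real.sqrt_pos.mpr (by norm_num)
      have hsum : (0:ℝ) < (8/7)*L + frob X := by
        have := frob_nonneg X
        nlinarith [hL0]
      exact mul_pos (mul_pos (mul_pos h87 hkpos) hsum) (Real.sqrt_pos.mpr hL0)
    have hchain : δ * (frob (U * Uᵀ) + frob X) * frob U ≤ δ * D0 := by
      have h1 : frob (U * Uᵀ) + frob X ≤ (8/7)*L + frob X := by linarith
      have hnn2 : (0:ℝ) ≤ δ * ((8/7)*L + frob X) := by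
        apply mul_nonneg hδ0
        have := frob_nonneg X
        nlinarith [hL0]
      calc δ * (frob (U * Uᵀ) + frob X) * frob U
          ≤ δ * ((8/7)*L + frob X) * ((k:ℝ)^((1:ℝ)/4) * (Real.sqrt (8/7) * Real.sqrt L)) :=
            mul_le_mul (mul_le_mul_of_nonneg_left h1 hδ0) hfU2 (frob_nonneg _) hnn2
        _ = δ * D0 := by rw [hD0]; ring
    have hδ' : δ ≤ ε / (2 * D0) := by
      have hden : 2 * Real.sqrt (8/7) * (k:ℝ)^((1:ℝ)/4) * ((8/7)*L + frob X) * Real.sqrt L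
          = 2 * D0 := by rw [hD0]; ring
      rw [← hden]
      convert hδ using 3 <;> norm_num
    calc frob G ≤ δ * (frob (U * Uᵀ) + frob X) * frob U := hstep
      _ ≤ δ * D0 := hchain
      _ ≤ (ε / (2 * D0)) * D0 := mul_le_mul_of_nonneg_right hδ' hD0pos.le
      _ = ε / 2 := by
          field_simp
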